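/- The schema Flattening, (p > ((p∧q) > r)) ↔ ((p∧q) > r), is valid on an order frame (W,<) if and only if the frame is flat. -/
import Mathlib


/-- Sentences of the language L: atoms p₀,p₁,…, negation, conjunction, and the
binary conditional `>` (written `cond`). -/
inductive Formula : Type
  | atom : ℕ → Formula
  | neg : Formula → Formula
  | conj : Formula → Formula → Formula
  | cond : Formula → Formula → Formula
  deriving DecidableEq

namespace Formula

/-- Material implication, defined as usual: p → q := ¬(p ∧ ¬q). -/
def impl (p q : Formula) : Formula := (p.conj q.neg).neg
/-- Disjunction, defined as usual: p ∨ q := ¬(¬p ∧ ¬q). -/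
def disj (p q : Formula) : Formula := (p.neg.conj q.neg).neg
/-- Material biconditional, defined as usual. -/
def biimp (p q : Formula) : Formula := (p.impl q).conj (q.impl p)
/-- □p abbreviates ¬p > p. -/
def box (p : Formula) : Formula := p.neg.cond p
/-- ◇p abbreviates ¬□¬p. -/
def dia (p : Formula) : Formula := p.neg.box.neg
/-- ⊥ abbreviates p₀ ∧ ¬p₀. -/
def bot : Formula := (atom 0).conj (atom 0).neg

end Formula

/-- An order frame: a nonempty type of worlds `W` together with, for each world
`w`, a strict well-order `lt w` (writing `lt w x y` for `x <_w y`) of a subset of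
`W` (the field of `lt w`: the relation is transitive, well-founded, and connected
on its field), such that `x <_w y` implies `w = x` or `w <_w x`. -/
structure OrderFrame (W : Type) : Type where
  nonempty : Nonempty W
  lt : W → W → W → Prop
  trans : ∀ w x y z, lt w x y → lt w y z → lt w x z
  wf : ∀ w, WellFounded (lt w)
  connected : ∀ w x y, (∃ z, lt w x z ∨ lt w z x) → (∃ z, lt w y z ∨ lt w z y) →
      x ≠ y → lt w x y ∨ lt w y x
  center : ∀ w x y, lt w x y → x = w ∨ lt w w x

namespace OrderFrame

variable {W : Type}

/-- Accessibility: `v ∈ R(w)` where `R(w) = {w} ∪ {v : w <_w v}`. -/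
def acc (F : OrderFrame W) (w v : W) : Prop := v = w ∨ F.lt w w v

/-- `x ≤_w y` iff `x, y ∈ R(w)` and not `y <_w x`. -/
def wkle (F : OrderFrame W) (w x y : W) : Prop :=
  F.acc w x ∧ F.acc w y ∧ ¬ F.lt w y x

end OrderFrame

/-- Truth at a world of an order model: atoms via the valuation `V`, Booleans
classically, and `p > q` is true at `w` iff either no world in `R(w)` satisfies `p`,
or there is `y ∈ R(w)` satisfying `p ∧ q` such that no `x <_w y` satisfies `p`. -/
def Truth {W : Type} (F : OrderFrame W) (V : ℕ → Set W) : Formula → W → Prop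
  | .atom n, w => w ∈ V n
  | .neg p, w => ¬ Truth F V p w
  | .conj p q, w => Truth F V p w ∧ Truth F V q w
  | .cond p q, w =>
      (∀ v, F.acc w v → ¬ Truth F V p v) ∨
      ∃ y, F.acc w y ∧ Truth F V p y ∧ Truth F V q y ∧
        ∀ x, F.lt w x y → ¬ Truth F V p x

/-- A frame is semi-flat iff for all w,x,y,z: if x <_w y and (y ≤_w z or
z ∈ R(x)\R(w)), then y ≤_x z. -/
def SemiFlat {W : Type} (F : OrderFrame W) : Prop :=
  ∀ w x y z, F.lt w x y →
    (F.wkle w y z ∨ (F.acc x z ∧ ¬ F.acc w z)) → F.wkle x y z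

/-- The accessibility relation of the frame is transitive. -/
def TransAcc {W : Type} (F : OrderFrame W) : Prop :=
  ∀ w u v, F.acc w u → F.acc u v → F.acc w v

/-- A frame is flat iff it is semi-flat and its accessibility relation is
transitive. -/
def Flat {W : Type} (F : OrderFrame W) : Prop := SemiFlat F ∧ TransAcc F


namespace OrderFrame

variable {W : Type} (F : OrderFrame W)

lemma lt_irr (w a : W) : ¬ F.lt w a a :=
  fun h => (F.wf w).asymmetric a a h h

lemma acc_self (w : W) : F.acc w w := Or.inl rfl

lemma not_lt_base (w a : W) : ¬ F.lt w a w := by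
  intro h
  rcases F.center w a w h with h' | h'
  · exact F.lt_irr w a (h' ▸ h)
  · exact F.lt_irr w w (F.trans w w a w h' h)

lemma acc_of_lt_left {w a b : W} (h : F.lt w a b) : F.acc w a := by
  rcases F.center w a b h with h' | h'
  · exact Or.inl h'
  · exact Or.inr h'

lemma acc_of_lt_right {w a b : W} (h : F.lt w a b) : F.acc w b := by
  rcases F.acc_of_lt_left h with h' | h'
  · exact Or.inr (h' ▸ h)
  · exact Or.inr (F.trans w w a b h' h)

lemma lt_base_of_acc {w a : W} (h : F.acc w a) (hne : a ≠ w) : F.lt w w a :=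
  h.resolve_left hne

lemma tot {w a b : W} (ha : F.acc w a) (hb : F.acc w b) (hne : a ≠ b) :
    F.lt w a b ∨ F.lt w b a := by
  rcases ha with ha' | ha'
  · rcases hb with hb' | hb'
    · exact absurd (ha'.trans hb'.symm) hne
    · exact Or.inl (ha' ▸ hb')
  · rcases hb with hb' | hb'
    · exact Or.inr (hb' ▸ ha')
    · exact F.connected w a b ⟨w, Or.inr ha'⟩ ⟨w, Or.inr hb'⟩ hne

end OrderFrame

/-- Semantic conditional: the truth condition of `p > q` with abstract
predicates in place of the truth sets of `p` and `q`. -/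
def sCond {W : Type} (F : OrderFrame W) (A C : W → Prop) (w : W) : Prop :=
  (∀ v, F.acc w v → ¬ A v) ∨
  ∃ y, F.acc w y ∧ A y ∧ C y ∧ ∀ x, F.lt w x y → ¬ A x

lemma truth_biimp {W : Type} (F : OrderFrame W) (V : ℕ → Set W) (a b : Formula) (w : W) :
    Truth F V (a.biimp b) w ↔ (Truth F V a w ↔ Truth F V b w) := by
  show (¬(Truth F V a w ∧ ¬ Truth F V b w) ∧ ¬(Truth F V b w ∧ ¬ Truth F V a w)) ↔ _
  tauto

/-- Key semantic lemma: on a flat frame, the Flattening equivalence holds with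
abstract predicates `P` (for `p`), `B` (for `p ∧ q`, so `B` entails `P`) and
`R` (for `r`). -/
lemma flat_key {W : Type} {F : OrderFrame W} (hSF : SemiFlat F) (hTA : TransAcc F)
    {P B R : W → Prop} (hBP : ∀ v, B v → P v) (w : W) :
    sCond F P (sCond F B R) w ↔ sCond F B R w := by
  constructor
  · rintro hP
    by_cases hB0 : ∃ z0, F.acc w z0 ∧ B z0
    swap
    · push_neg at hB0
      exact Or.inl fun v hv => hB0 v hv
    obtain ⟨z0, hwz0, hBz0⟩ := hB0
    rcases hP with hno | ⟨y, hwy, hPy, hCy, hmin⟩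
    · exact (hno z0 hwz0 (hBP z0 hBz0)).elim
    rcases eq_or_ne y w with rfl | hyw
    · exact hCy
    have hwwy : F.lt w w y := F.lt_base_of_acc hwy hyw
    have hPw : ¬ P w := hmin w hwwy
    have hBw : ¬ B w := fun h => hPw (hBP w h)
    rcases hCy with hno | ⟨z, hyz, hBz, hRz, hminz⟩
    · exfalso
      have h1 : ¬ F.lt w z0 y := fun h => hmin z0 h (hBP z0 hBz0)
      rcases eq_or_ne z0 y with rfl | hne
      · exact hno z0 (Or.inl rfl) hBz0
      · have h2 : F.lt w y z0 := (F.tot hwy hwz0 (Ne.symm hne)).resolve_right h1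
        have h3 := hSF w y z0 z0 h2 (Or.inl ⟨hwz0, hwz0, F.lt_irr w z0⟩)
        exact hno z0 h3.1 hBz0
    · refine Or.inr ⟨z, hTA w y z hwy hyz, hBz, hRz, ?_⟩
      intro u hu hBu
      have hPu := hBP u hBu
      have hwuA : F.acc w u := F.acc_of_lt_left hu
      rcases eq_or_ne u y with rfl | huy
      · -- u = y (the variable y is replaced by u)
        rcases hyz with h | h
        · exact F.lt_irr w u (h ▸ hu)
        · exact hminz u h hBu
      · have h4 : ¬ F.lt w u y := fun h => hmin u h hPu
        have hyu : F.lt w y u := (F.tot hwy hwuA (Ne.symm huy)).resolve_right h4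
        have hnzu : ¬ F.lt w z u := fun h => F.lt_irr w u (F.trans w u z u hu h)
        have h3 := hSF w y u z hyu (Or.inl ⟨hwuA, hTA w y z hwy hyz, hnzu⟩)
        have hne2 : u ≠ z := fun h => F.lt_irr w u (h ▸ hu)
        have h5 : F.lt y u z := (F.tot h3.1 h3.2.1 hne2).resolve_right h3.2.2
        exact hminz u h5 hBu
  · intro hB
    by_cases hP0 : ∃ v, F.acc w v ∧ P v
    swap
    · push_neg at hP0
      exact Or.inl fun v hv => hP0 v hv
    obtain ⟨v0, hv0, hPv0⟩ := hP0
    by_cases hPw : P w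
    · refine Or.inr ⟨w, F.acc_self w, hPw, hB, ?_⟩
      intro u hu _
      exact F.not_lt_base w u hu
    · have hv0w : v0 ≠ w := fun h => hPw (h ▸ hPv0)
      have hlt0 : F.lt w w v0 := F.lt_base_of_acc hv0 hv0w
      obtain ⟨y, ⟨hwy', hPy⟩, hmin'⟩ :=
        (F.wf w).has_min {v | F.lt w w v ∧ P v} ⟨v0, hlt0, hPv0⟩
      have hwy : F.acc w y := Or.inr hwy'
      have hmin : ∀ u, F.lt w u y → ¬ P u := by
        intro u hu hPu
        rcases F.acc_of_lt_left hu with h | h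
        · exact hPw (h ▸ hPu)
        · exact hmin' u ⟨h, hPu⟩ hu
      refine Or.inr ⟨y, hwy, hPy, ?_, hmin⟩
      rcases hB with hno | ⟨z, hwz, hBz, hRz, hminz⟩
      · exact Or.inl fun v hv hBv => hno v (hTA w y v hwy hv) hBv
      · have hPz := hBP z hBz
        have h1 : ¬ F.lt w z y := fun h => hmin z h hPz
        rcases eq_or_ne z y with rfl | hne
        · refine Or.inr ⟨z, Or.inl rfl, hBz, hRz, ?_⟩
          intro u hu _
          exact F.not_lt_base z u hu
        · have hyz : F.lt w y z := (F.tot hwy hwz (Ne.symm hne)).resolve_right h1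
          have h3 := hSF w y z z hyz (Or.inl ⟨hwz, hwz, F.lt_irr w z⟩)
          refine Or.inr ⟨z, h3.1, hBz, hRz, ?_⟩
          intro u hu hBu
          have hwuA : F.acc w u := hTA w y u hwy (F.acc_of_lt_left hu)
          have h5 : ¬ F.lt w u z := fun h => hminz u h hBu
          have h7 := hSF w y z u hyz (Or.inl ⟨hwz, hwuA, h5⟩)
          exact h7.2.2 hu

/-- the schema Flattening, (p > ((p∧q) > r)) ↔ ((p∧q) > r), is valid
on an order frame iff the frame is flat. -/
theorem flattening_characterizes_flat {W : Type} (F : OrderFrame W) :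
    (∀ (V : ℕ → Set W) (w : W) (p q r : Formula),
      Truth F V ((p.cond ((p.conj q).cond r)).biimp ((p.conj q).cond r)) w) ↔
    Flat F := by
  constructor
  · intro H
    -- the Flattening instance with atoms, as abstract predicates
    have key' : ∀ (P Q R : W → Prop) (w : W),
        sCond F P (sCond F (fun v => P v ∧ Q v) R) w ↔
        sCond F (fun v => P v ∧ Q v) R w := by
      intro P Q R w
      have h := H (fun n => match n with
        | 0 => {t | P t} | 1 => {t | Q t} | _ => {t | R t}) w
        (.atom 0) (.atom 1) (.atom 2)
      rw [truth_biimp] at h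
      exact h
    have hTA : TransAcc F := by
      intro w u v hwu huv
      by_contra hwv
      have h := key' (fun t => t = u ∨ t = v) (fun t => t = v) (fun _ => False) w
      have hR : sCond F (fun t => (t = u ∨ t = v) ∧ t = v) (fun _ => False) w := by
        refine Or.inl ?_
        rintro t ht ⟨_, rfl⟩
        exact hwv ht
      rcases h.mpr hR with hno | ⟨y, hwy, hPy, hCy, _⟩
      · exact hno u hwu (Or.inl rfl)
      rcases hPy with rfl | rfl
      · rcases hCy with hno2 | ⟨t, _, _, hRt, _⟩
        · exact hno2 v huv ⟨Or.inr rfl, rfl⟩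
        · exact hRt
      · exact hwv hwy
    refine ⟨?_, hTA⟩
    intro w x y z hxy hOr
    by_contra hn
    have hax : F.acc w x := F.acc_of_lt_left hxy
    have hay : F.acc w y := F.acc_of_lt_right hxy
    have hynw : y ≠ w := fun h => F.not_lt_base w x (h ▸ hxy)
    have hwy : F.lt w w y := F.lt_base_of_acc hay hynw
    rcases hOr with ⟨_, haz, hnzy⟩ | ⟨hxz, hnwz⟩
    · -- Case A : wkle w y z
      have hznw : z ≠ w := fun h => hnzy (h ▸ hwy)
      have hwz : F.lt w w z := F.lt_base_of_acc haz hznw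
      have hyz' : y = z ∨ F.lt w y z := by
        rcases eq_or_ne y z with h | h
        · exact Or.inl h
        · exact Or.inr ((F.tot hay haz h).resolve_right hnzy)
      have hxz' : F.lt w x z := by
        rcases hyz' with h | h
        · exact h ▸ hxy
        · exact F.trans w x y z hxy h
      have hminx : ∀ t, F.lt w t x → ¬ (t = x ∨ t = y ∨ t = z) := by
        rintro t ht (rfl | rfl | rfl)
        · exact F.lt_irr w t ht
        · exact F.lt_irr w x (F.trans w x t x hxy ht)
        · exact F.lt_irr w x (F.trans w x t x hxz' ht)
      by_cases haxy : F.acc x y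
      · by_cases haxz : F.acc x z
        · -- F3 : acc x y, acc x z, so the failure is lt x z y
          have hzy : F.lt x z y := by
            by_contra h
            exact hn ⟨haxy, haxz, h⟩
          have h := key' (fun t => t = x ∨ t = y ∨ t = z) (fun t => t = y ∨ t = z)
            (fun t => t = y) w
          have hR : sCond F (fun v => (v = x ∨ v = y ∨ v = z) ∧ (v = y ∨ v = z))
              (fun t => t = y) w := by
            refine Or.inr ⟨y, hay, ⟨Or.inr (Or.inl rfl), Or.inl rfl⟩, rfl, ?_⟩
            rintro t ht ⟨_, rfl | rfl⟩
            · exact F.lt_irr w t ht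
            · exact hnzy ht
          rcases h.mpr hR with hno | ⟨t, hat, hPt, hCt, hmint⟩
          · exact hno x hax (Or.inl rfl)
          rcases hPt with rfl | rfl | rfl
          · rcases hCt with hno2 | ⟨s, has, hBs, hrs, hmins⟩
            · exact hno2 y haxy ⟨Or.inr (Or.inl rfl), Or.inl rfl⟩
            · subst hrs
              exact hmins z hzy ⟨Or.inr (Or.inr rfl), Or.inr rfl⟩
          · exact hmint x hxy (Or.inl rfl)
          · exact hmint x hxz' (Or.inl rfl)
        · -- F2 : acc x y, ¬ acc x z
          have h := key' (fun t => t = x ∨ t = y ∨ t = z) (fun t => t = z)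
            (fun _ => False) w
          have hL : sCond F (fun t => t = x ∨ t = y ∨ t = z)
              (sCond F (fun v => (v = x ∨ v = y ∨ v = z) ∧ v = z) (fun _ => False)) w := by
            refine Or.inr ⟨x, hax, Or.inl rfl, ?_, hminx⟩
            refine Or.inl ?_
            rintro t hat ⟨_, rfl⟩
            exact haxz hat
          rcases h.mp hL with hno | ⟨t, hat, hBt, hrt, _⟩
          · exact hno z haz ⟨Or.inr (Or.inr rfl), rfl⟩
          · exact hrt
      · -- F1 : ¬ acc x y
        have h := key' (fun t => t = x ∨ t = y ∨ t = z) (fun t => t = y ∨ t = z)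
          (fun t => F.acc x t) w
        have hL : sCond F (fun t => t = x ∨ t = y ∨ t = z)
            (sCond F (fun v => (v = x ∨ v = y ∨ v = z) ∧ (v = y ∨ v = z))
              (fun t => F.acc x t)) w := by
          refine Or.inr ⟨x, hax, Or.inl rfl, ?_, hminx⟩
          by_cases haxz : F.acc x z
          · refine Or.inr ⟨z, haxz, ⟨Or.inr (Or.inr rfl), Or.inr rfl⟩, haxz, ?_⟩
            rintro t ht ⟨_, rfl | rfl⟩
            · exact haxy (F.acc_of_lt_left ht)
            · exact F.lt_irr x t ht
          · refine Or.inl ?_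
            rintro t hat ⟨_, rfl | rfl⟩
            · exact haxy hat
            · exact haxz hat
        rcases h.mp hL with hno | ⟨t, hat, ⟨_, ht2⟩, hrt, hmint⟩
        · exact hno y hay ⟨Or.inr (Or.inl rfl), Or.inl rfl⟩
        rcases ht2 with rfl | rfl
        · exact haxy hrt
        · rcases hyz' with rfl | hlt
          · exact haxy hrt
          · exact hmint y hlt ⟨Or.inr (Or.inl rfl), Or.inl rfl⟩
    · -- Case B : z ∈ R(x) \ R(w)
      have hn' : ¬ F.acc x y ∨ F.lt x z y := by
        by_contra h
        push_neg at h
        exact hn ⟨h.1, hxz, h.2⟩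
      have h := key' (fun t => t = x ∨ t = y ∨ t = z) (fun t => t = y ∨ t = z)
        (fun t => t = y) w
      have hR : sCond F (fun v => (v = x ∨ v = y ∨ v = z) ∧ (v = y ∨ v = z))
          (fun t => t = y) w := by
        refine Or.inr ⟨y, hay, ⟨Or.inr (Or.inl rfl), Or.inl rfl⟩, rfl, ?_⟩
        rintro t ht ⟨_, rfl | rfl⟩
        · exact F.lt_irr w t ht
        · exact hnwz (F.acc_of_lt_left ht)
      rcases h.mpr hR with hno | ⟨t, hat, hPt, hCt, hmint⟩
      · exact hno x hax (Or.inl rfl)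
      rcases hPt with rfl | rfl | rfl
      · rcases hCt with hno2 | ⟨s, has, hBs, hrs, hmins⟩
        · exact hno2 z hxz ⟨Or.inr (Or.inr rfl), Or.inr rfl⟩
        · subst hrs
          rcases hn' with h1 | h1
          · exact h1 has
          · exact hmins z h1 ⟨Or.inr (Or.inr rfl), Or.inr rfl⟩
      · exact hmint x hxy (Or.inl rfl)
      · exact hnwz hat
  · intro hF V w p q r
    rw [truth_biimp]
    exact flat_key (F := F) hF.1 hF.2
      (P := Truth F V p) (B := Truth F V (p.conj q)) (R := Truth F V r)
      (fun v h => h.1) w
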